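/- arXiv:1509.07776 — 2 statements merged into one kernel-verified Lean document; each statement's English description precedes it below -/
import Mathlib

section
/- For every sequence x ∈ {0,1}^∞ there exists a stationary measure μ_x on {0,1}^∞ such that d(δ_x, μ_x) = 0, where d(μ,ρ) = liminf_n (1/n) E_μ[log(μ(x_{1..n})/ρ(x_{1..n}))]. Specifically, μ_x(x_{1..n}) ≥ π(1)/(n+1)^2 for all n, where π(1) > 0 is a constant independent of n. -/
/-- A time-series distribution on `{0,1}^∞`, given by its cylinder probabilities. -/
structure TSD where
  p : List Bool → ℝ
  nonneg : ∀ w, 0 ≤ p w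
  empty_one : p [] = 1
  additive : ∀ w, p w = p (w ++ [false]) + p (w ++ [true])

/-- Stationarity of a time-series distribution, expressed on cylinder
probabilities: the shifted distribution coincides with the original one. -/
def StationaryTSD (μ : TSD) : Prop :=
  ∀ w : List Bool, μ.p w = μ.p (false :: w) + μ.p (true :: w)

/-- The prefix `x_1 … x_n` of an infinite binary sequence. -/
def pref (x : ℕ → Bool) (n : ℕ) : List Bool := (List.range n).map x

/-- `−log₂ t`, valued in the extended reals (so that `−log₂ 0 = ∞`). -/
noncomputable def negLog2 (t : ℝ) : EReal :=
  if t ≤ 0 then ⊤ else ((-Real.logb 2 t : ℝ) : EReal)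

open Filter

namespace Stmt11

/-- telescoping sums -/
lemma hasSum_telescope (g : ℕ → ℝ) (hmono : ∀ n, g (n + 1) ≤ g n)
    (h0 : Tendsto g atTop (nhds 0)) :
    HasSum (fun n => g n - g (n + 1)) (g 0) := by
  have hanti : Antitone g := antitone_nat_of_succ_le hmono
  have hgnn : ∀ n, 0 ≤ g n := fun n => hanti.le_of_tendsto h0 n
  have hnn : ∀ n, 0 ≤ g n - g (n + 1) := fun n => by linarith [hmono n]
  have hps : ∀ N, ∑ i ∈ Finset.range N, (g i - g (i + 1)) = g 0 - g N :=
    fun N => Finset.sum_range_sub' g N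
  have hsummable : Summable (fun n => g n - g (n + 1)) :=
    summable_of_sum_range_le hnn (fun N => by rw [hps N]; linarith [hgnn N])
  have h1 := hsummable.hasSum.tendsto_sum_nat
  have h2 : Tendsto (fun N => ∑ i ∈ Finset.range N, (g i - g (i + 1))) atTop
      (nhds (g 0)) := by
    simp only [hps]
    simpa using (tendsto_const_nhds (x := g 0)).sub h0
  have h3 := tendsto_nhds_unique h1 h2
  rw [← h3]
  exact hsummable.hasSum

variable (x : ℕ → Bool)

/-- indicator that the periodic extension (period `m`) of `x`, read from
position `i`, starts with the word `w` -/
def q (m : ℕ) : ℕ → List Bool → ℝ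
  | _, [] => 1
  | i, b :: w => (if x (i % m) = b then (1 : ℝ) else 0) * q m ((i + 1) % m) w

lemma q_nil (m i : ℕ) : q x m i [] = 1 := rfl

lemma q_nonneg (m i : ℕ) (w : List Bool) : 0 ≤ q x m i w := by
  induction w generalizing i with
  | nil => norm_num [q]
  | cons b w ih =>
      rw [q]
      have := ih ((i + 1) % m)
      positivity

lemma q_le_one (m i : ℕ) (w : List Bool) : q x m i w ≤ 1 := by
  induction w generalizing i with
  | nil => simp [q]
  | cons b w ih =>
      rw [q]
      have h1 := ih ((i + 1) % m)
      have h2 := q_nonneg x m ((i + 1) % m) w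
      split <;> nlinarith

lemma q_append (m i : ℕ) (w : List Bool) :
    q x m i (w ++ [false]) + q x m i (w ++ [true]) = q x m i w := by
  induction w generalizing i with
  | nil =>
      simp only [List.nil_append, q]
      rcases Bool.eq_false_or_eq_true (x (i % m)) with h | h <;> simp [h]
  | cons b w ih =>
      simp only [List.cons_append, q, List.append_eq]
      rw [← mul_add, ih]

lemma q_cons_sum (m i : ℕ) (w : List Bool) :
    q x m i (false :: w) + q x m i (true :: w) = q x m ((i + 1) % m) w := by
  simp only [q]
  rcases Bool.eq_false_or_eq_true (x (i % m)) with h | h <;> simp [h]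

lemma q_range' (m : ℕ) : ∀ (n i : ℕ), i + n ≤ m →
    q x m i ((List.range' i n).map x) = 1 := by
  intro n
  induction n with
  | zero => intro i _; simp [q]
  | succ n ih =>
      intro i h
      have hi : i < m := by omega
      rw [List.range'_succ, List.map_cons, q, Nat.mod_eq_of_lt hi, if_pos rfl,
        one_mul]
      rcases Nat.eq_zero_or_pos n with h0 | h0
      · subst h0; simp [q]
      · have hi1 : i + 1 < m := by omega
        rw [Nat.mod_eq_of_lt hi1]
        exact ih (i + 1) (by omega)

/-- uniform measure on the orbit of the periodic point of period `m + 1`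
whose period word is `x_0 … x_m` -/
noncomputable def nu (m : ℕ) (w : List Bool) : ℝ :=
  (∑ i : Fin (m + 1), q x (m + 1) i w) / (m + 1)

lemma nu_nonneg (m : ℕ) (w : List Bool) : 0 ≤ nu x m w := by
  apply div_nonneg _ (by positivity)
  exact Finset.sum_nonneg fun i _ => q_nonneg x (m + 1) i w

lemma nu_le_one (m : ℕ) (w : List Bool) : nu x m w ≤ 1 := by
  rw [nu, div_le_one (by positivity)]
  calc ∑ i : Fin (m + 1), q x (m + 1) i w ≤ ∑ _i : Fin (m + 1), (1 : ℝ) :=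
        Finset.sum_le_sum fun i _ => q_le_one x (m + 1) i w
    _ = (m : ℝ) + 1 := by simp

lemma nu_empty (m : ℕ) : nu x m [] = 1 := by
  rw [nu, Finset.sum_congr rfl (fun (i : Fin (m + 1)) _ => q_nil x (m + 1) i)]
  simp
  exact Nat.cast_add_one_ne_zero m

lemma nu_additive (m : ℕ) (w : List Bool) :
    nu x m (w ++ [false]) + nu x m (w ++ [true]) = nu x m w := by
  simp only [nu, ← add_div, ← Finset.sum_add_distrib]
  congr 1
  exact Finset.sum_congr rfl fun i _ => q_append x (m + 1) i w

lemma nu_stationary (m : ℕ) (w : List Bool) :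
    nu x m (false :: w) + nu x m (true :: w) = nu x m w := by
  simp only [nu, ← add_div, ← Finset.sum_add_distrib]
  congr 1
  have h1 : ∀ i : Fin (m + 1),
      q x (m + 1) (i : ℕ) (false :: w) + q x (m + 1) (i : ℕ) (true :: w)
        = q x (m + 1) ((i + 1 : Fin (m + 1)) : ℕ) w := by
    intro i
    rw [q_cons_sum]
    congr 1
    rw [Fin.add_def]
    simp [Fin.val_one', Nat.add_mod]
  rw [Finset.sum_congr rfl (fun i _ => h1 i)]
  calc ∑ i : Fin (m + 1), q x (m + 1) ((i + 1 : Fin (m + 1)) : ℕ) w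
      = ∑ i : Fin (m + 1), q x (m + 1) ((finRotate (m + 1) i : Fin (m + 1)) : ℕ) w := by
        refine Finset.sum_congr rfl fun i _ => ?_
        rw [finRotate_succ_apply]
    _ = ∑ i : Fin (m + 1), q x (m + 1) (i : ℕ) w :=
        Equiv.sum_comp (finRotate (m + 1)) (fun i : Fin (m + 1) => q x (m + 1) (i : ℕ) w)

/-- the mixing weights `1/((m+1)(m+2))` -/
noncomputable def wt (m : ℕ) : ℝ := ((m : ℝ) + 1)⁻¹ - ((m : ℝ) + 2)⁻¹

lemma wt_eq (m : ℕ) : wt m = (((m : ℝ) + 1) * ((m : ℝ) + 2))⁻¹ := by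
  rw [wt]
  have h1 : ((m : ℝ) + 1) ≠ 0 := by positivity
  have h2 : ((m : ℝ) + 2) ≠ 0 := by positivity
  field_simp
  ring

lemma wt_nonneg (m : ℕ) : 0 ≤ wt m := by rw [wt_eq]; positivity

lemma hasSum_wt : HasSum wt 1 := by
  have := hasSum_telescope (fun m => ((m : ℝ) + 1)⁻¹)
    (fun n => by
      apply inv_anti₀ (by positivity)
      push_cast; linarith)
    (by
      have h1 : Tendsto (fun n : ℕ => ((n : ℝ) + 1)) atTop atTop :=
        tendsto_atTop_add_const_right _ 1 tendsto_natCast_atTop_atTop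
      exact tendsto_inv_atTop_zero.comp h1)
  simp only [Nat.cast_zero, zero_add, inv_one] at this
  have he : wt = fun n : ℕ => ((n : ℝ) + 1)⁻¹ - (((n + 1 : ℕ) : ℝ) + 1)⁻¹ := by
    funext n
    rw [wt]
    push_cast
    ring_nf
  rw [he]
  exact this

lemma summable_wt : Summable wt := hasSum_wt.summable

lemma summable_wt_mul (f : ℕ → ℝ) (h0 : ∀ m, 0 ≤ f m) (h1 : ∀ m, f m ≤ 1) :
    Summable (fun m => wt m * f m) := by
  refine Summable.of_nonneg_of_le (fun m => mul_nonneg (wt_nonneg m) (h0 m))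
    (fun m => ?_) summable_wt
  calc wt m * f m ≤ wt m * 1 := mul_le_mul_of_nonneg_left (h1 m) (wt_nonneg m)
    _ = wt m := mul_one _

/-- the stationary measure: mixture of the periodic-orbit measures -/
noncomputable def mup (w : List Bool) : ℝ := ∑' m, wt m * nu x m w

lemma summable_mup (w : List Bool) : Summable (fun m => wt m * nu x m w) :=
  summable_wt_mul _ (fun m => nu_nonneg x m w) (fun m => nu_le_one x m w)

lemma mup_nonneg (w : List Bool) : 0 ≤ mup x w :=
  tsum_nonneg fun m => mul_nonneg (wt_nonneg m) (nu_nonneg x m w)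

lemma mup_empty : mup x [] = 1 := by
  have h : ∀ m, wt m * nu x m [] = wt m := fun m => by rw [nu_empty, mul_one]
  rw [mup, tsum_congr h, hasSum_wt.tsum_eq]

lemma mup_le_one (w : List Bool) : mup x w ≤ 1 := by
  have h := Summable.tsum_le_tsum (f := fun m => wt m * nu x m w) (g := wt)
    (fun m => by
      calc wt m * nu x m w ≤ wt m * 1 :=
            mul_le_mul_of_nonneg_left (nu_le_one x m w) (wt_nonneg m)
        _ = wt m := mul_one _)
    (summable_mup x w) summable_wt
  calc mup x w ≤ ∑' m, wt m := h
    _ = 1 := hasSum_wt.tsum_eq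

lemma mup_additive (w : List Bool) :
    mup x w = mup x (w ++ [false]) + mup x (w ++ [true]) := by
  rw [mup, mup, mup, ← Summable.tsum_add (summable_mup x _) (summable_mup x _)]
  exact tsum_congr fun m => by rw [← mul_add, nu_additive]

lemma mup_stationary (w : List Bool) :
    mup x w = mup x (false :: w) + mup x (true :: w) := by
  rw [mup, mup, mup, ← Summable.tsum_add (summable_mup x _) (summable_mup x _)]
  exact tsum_congr fun m => by rw [← mul_add, nu_stationary]

lemma nu_pref (m n : ℕ) (h : n ≤ m + 1) :
    ((m : ℝ) + 1)⁻¹ ≤ nu x m (pref x n) := by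
  have hq : q x (m + 1) 0 (pref x n) = 1 := by
    have h1 := q_range' x (m + 1) n 0 (by omega)
    simp only [pref, List.range_eq_range']
    exact h1
  have hle : (1 : ℝ) ≤ ∑ i : Fin (m + 1), q x (m + 1) i (pref x n) := by
    have h2 := Finset.single_le_sum
      (f := fun i : Fin (m + 1) => q x (m + 1) (i : ℕ) (pref x n))
      (fun i _ => q_nonneg x (m + 1) i (pref x n))
      (Finset.mem_univ (0 : Fin (m + 1)))
    simp only [Fin.val_zero, hq] at h2
    exact h2
  rw [nu, inv_eq_one_div]
  gcongr

lemma mup_lower (n : ℕ) :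
    (1 / 2) / ((n : ℝ) + 1) ^ 2 ≤ mup x (pref x n) := by
  rcases n with _ | k
  · have h0 : pref x 0 = [] := rfl
    rw [h0, mup_empty]
    norm_num
  · -- n = k + 1
    set g : ℕ → ℝ := fun j => (1 / 2) * ((k : ℝ) + (j : ℝ) + 1)⁻¹ ^ 2 with hg
    have hgmono : ∀ j, g (j + 1) ≤ g j := by
      intro j
      simp only [hg]
      have h1 : (0:ℝ) < (k : ℝ) + (j : ℝ) + 1 := by positivity
      have h2 : (k : ℝ) + (j : ℝ) + 1 ≤ (k : ℝ) + ((j : ℕ) + 1 : ℕ) + 1 := by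
        push_cast; linarith
      gcongr <;> (push_cast; linarith)
    have hg0 : Tendsto g atTop (nhds 0) := by
      have h1 : Tendsto (fun j : ℕ => ((k : ℝ) + (j : ℝ) + 1)) atTop atTop := by
        apply tendsto_atTop_add_const_right
        apply tendsto_atTop_add_const_left
        exact tendsto_natCast_atTop_atTop
      have h2 : Tendsto (fun j : ℕ => ((k : ℝ) + (j : ℝ) + 1)⁻¹) atTop (nhds 0) :=
        tendsto_inv_atTop_zero.comp h1
      have h3 : Tendsto (fun j : ℕ => ((k : ℝ) + (j : ℝ) + 1)⁻¹ ^ 2) atTop (nhds 0) := by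
        have := h2.pow 2
        simpa using this
      have := h3.const_mul (1 / 2 : ℝ)
      simpa [hg] using this
    have htel : HasSum (fun j => g j - g (j + 1)) (g 0) := hasSum_telescope g hgmono hg0
    have hterm : ∀ j : ℕ, g j - g (j + 1) ≤ wt (k + j) * nu x (k + j) (pref x (k + 1)) := by
      intro j
      have hnu : (((k + j : ℕ) : ℝ) + 1)⁻¹ ≤ nu x (k + j) (pref x (k + 1)) :=
        nu_pref x (k + j) (k + 1) (by omega)
      have hwt : wt (k + j) = ((((k + j : ℕ) : ℝ) + 1) * (((k + j : ℕ) : ℝ) + 2))⁻¹ :=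
        wt_eq (k + j)
      set u : ℝ := (k : ℝ) + (j : ℝ) with hu
      have hcast : ((k + j : ℕ) : ℝ) = u := by push_cast; ring
      have hu0 : (0:ℝ) ≤ u := by positivity
      have step1 : wt (k + j) * (u + 1)⁻¹ ≤ wt (k + j) * nu x (k + j) (pref x (k + 1)) := by
        apply mul_le_mul_of_nonneg_left _ (wt_nonneg _)
        rw [← hcast] at *
        exact hnu
      refine le_trans ?_ step1
      rw [hwt, hcast]
      have e1 : g j - g (j + 1) = (1/2) * ((u + 1)⁻¹ ^ 2 - (u + 2)⁻¹ ^ 2) := by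
        simp only [hg]
        push_cast
        ring_nf
        rw [hu]
        ring
      rw [e1]
      have h1 : (0:ℝ) < u + 1 := by linarith
      have h2 : (0:ℝ) < u + 2 := by linarith
      have key : ((u + 1) * (u + 2))⁻¹ * (u + 1)⁻¹ -
          (1 / 2) * ((u + 1)⁻¹ ^ 2 - (u + 2)⁻¹ ^ 2) = (2 * (u + 1) ^ 2 * (u + 2) ^ 2)⁻¹ := by
        field_simp
        ring
      have hpos : (0:ℝ) ≤ (2 * (u + 1) ^ 2 * (u + 2) ^ 2)⁻¹ := by positivity
      linarith
    have hmain := Summable.tsum_le_tsum_of_inj (f := fun j => g j - g (j + 1))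
      (g := fun m => wt m * nu x m (pref x (k + 1))) (fun j => k + j)
      (add_right_injective k)
      (fun c _ => mul_nonneg (wt_nonneg c) (nu_nonneg x c _))
      hterm htel.summable (summable_mup x _)
    rw [htel.tsum_eq] at hmain
    have hmup : (fun m => wt m * nu x m (pref x (k + 1))) = fun m => wt m * nu x m (pref x (k + 1)) := rfl
    have hfinal : g 0 ≤ mup x (pref x (k + 1)) := hmain
    refine le_trans ?_ hfinal
    simp only [hg, Nat.cast_zero, add_zero]
    rw [inv_pow, ← div_eq_mul_inv]
    have hc : ((k + 1 : ℕ) : ℝ) + 1 = (k : ℝ) + 2 := by push_cast; ring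
    rw [hc]
    have hk : (0:ℝ) ≤ (k : ℝ) := Nat.cast_nonneg k
    gcongr <;> nlinarith

lemma mup_pos (n : ℕ) : 0 < mup x (pref x n) :=
  lt_of_lt_of_le (by positivity) (mup_lower x n)

lemma tendsto_aux :
    Tendsto (fun n : ℕ => ((n : ℝ))⁻¹ * (1 + 2 * Real.logb 2 ((n : ℝ) + 1)))
      atTop (nhds 0) := by
  have hlog2 : Real.log 2 ≠ 0 := by
    have := Real.log_pos (by norm_num : (1:ℝ) < 2); linarith
  have h1 : Tendsto (fun y : ℝ => Real.log y / y) atTop (nhds 0) := by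
    have := Real.isLittleO_log_id_atTop.tendsto_div_nhds_zero
    simpa using this
  have h2 : Tendsto (fun n : ℕ => ((n : ℝ) + 1)) atTop atTop :=
    tendsto_atTop_add_const_right _ 1 tendsto_natCast_atTop_atTop
  have h3 : Tendsto (fun n : ℕ => Real.log ((n : ℝ) + 1) / ((n : ℝ) + 1)) atTop (nhds 0) :=
    h1.comp h2
  have hinv : Tendsto (fun n : ℕ => ((n : ℝ))⁻¹) atTop (nhds 0) := by
    have := tendsto_inv_atTop_zero.comp (tendsto_natCast_atTop_atTop (R := ℝ))
    simpa [Function.comp_def] using this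
  have h4 : Tendsto (fun n : ℕ => ((n : ℝ) + 1) / (n : ℝ)) atTop (nhds 1) := by
    have hlim : Tendsto (fun n : ℕ => 1 + ((n : ℝ))⁻¹) atTop (nhds 1) := by
      have := (tendsto_const_nhds (x := (1:ℝ)) (f := atTop (α := ℕ))).add hinv
      simpa using this
    apply hlim.congr'
    filter_upwards [eventually_ge_atTop 1] with n hn
    have hn' : ((n : ℝ)) ≠ 0 := by
      have : (0:ℝ) < (n : ℝ) := by exact_mod_cast Nat.pos_of_ne_zero (by omega)
      linarith
    field_simp
  have h5 : Tendsto (fun n : ℕ =>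
      Real.log ((n : ℝ) + 1) / ((n : ℝ) + 1) * (((n : ℝ) + 1) / (n : ℝ)))
      atTop (nhds 0) := by
    have := h3.mul h4
    simpa using this
  have h6 : Tendsto (fun n : ℕ => Real.log ((n : ℝ) + 1) * ((n : ℝ))⁻¹) atTop (nhds 0) := by
    apply h5.congr
    intro n
    have hb : ((n : ℝ) + 1) ≠ 0 := by positivity
    rw [div_mul_div_comm, mul_comm (Real.log ((n : ℝ) + 1)) ((n : ℝ) + 1),
      mul_div_mul_left _ _ hb, div_eq_mul_inv]
  have h7 : Tendsto (fun n : ℕ =>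
      ((n : ℝ))⁻¹ + (2 * (Real.log 2)⁻¹) * (Real.log ((n : ℝ) + 1) * ((n : ℝ))⁻¹))
      atTop (nhds 0) := by
    have := hinv.add (h6.const_mul (2 * (Real.log 2)⁻¹))
    simpa using this
  apply h7.congr
  intro n
  rw [Real.logb, div_eq_mul_inv]
  ring

end Stmt11

/-- for every `x ∈ {0,1}^∞` there is a stationary measure `μ_x`
with `μ_x(x_{1..n}) ≥ π(1)/(n+1)^2` for a constant `π(1) > 0`, and hence
`d(δ_x, μ_x) = liminf (1/n)(−log₂ μ_x(x_{1..n})) = 0`. -/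
theorem stmt11 (x : ℕ → Bool) :
    ∃ μ : TSD, StationaryTSD μ ∧
      (∃ c : ℝ, 0 < c ∧ ∀ n : ℕ, c / ((n : ℝ) + 1)^2 ≤ μ.p (pref x n)) ∧
      Filter.liminf
        (fun n : ℕ => ((((n : ℝ))⁻¹ : ℝ) : EReal) * negLog2 (μ.p (pref x n)))
        Filter.atTop = 0 := by
  refine ⟨⟨Stmt11.mup x, Stmt11.mup_nonneg x, Stmt11.mup_empty x, Stmt11.mup_additive x⟩,
    Stmt11.mup_stationary x, ⟨1 / 2, by norm_num, fun n => Stmt11.mup_lower x n⟩, ?_⟩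
  have hpos : ∀ n, 0 < Stmt11.mup x (pref x n) := Stmt11.mup_pos x
  set r : ℕ → ℝ := fun n => ((n : ℝ))⁻¹ * (- Real.logb 2 (Stmt11.mup x (pref x n))) with hr
  have heq : ∀ n : ℕ, ((((n : ℝ))⁻¹ : ℝ) : EReal) * negLog2 (Stmt11.mup x (pref x n))
      = ((r n : ℝ) : EReal) := by
    intro n
    rw [negLog2, if_neg (not_le.mpr (hpos n)), ← EReal.coe_mul]
  have hr0 : ∀ n, 0 ≤ r n := by
    intro n
    apply mul_nonneg (by positivity)
    have := Real.logb_nonpos (b := 2) (by norm_num) (le_of_lt (hpos n))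
      (Stmt11.mup_le_one x _)
    linarith
  have hub : ∀ n, r n ≤ ((n : ℝ))⁻¹ * (1 + 2 * Real.logb 2 ((n : ℝ) + 1)) := by
    intro n
    apply mul_le_mul_of_nonneg_left _ (by positivity)
    have hp := Stmt11.mup_lower x n
    have hlb : Real.logb 2 ((1 / 2) / ((n : ℝ) + 1) ^ 2)
        ≤ Real.logb 2 (Stmt11.mup x (pref x n)) :=
      (Real.logb_le_logb (by norm_num) (by positivity) (hpos n)).mpr hp
    have hcalc : Real.logb 2 ((1 / 2) / ((n : ℝ) + 1) ^ 2)
        = -1 - 2 * Real.logb 2 ((n : ℝ) + 1) := by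
      rw [Real.logb_div (by norm_num) (by positivity), Real.logb_pow]
      have hhalf : Real.logb 2 (1 / 2 : ℝ) = -1 := by
        rw [one_div, Real.logb_inv, Real.logb_self_eq_one (by norm_num)]
      rw [hhalf]
      push_cast
      ring
    rw [hcalc] at hlb
    linarith
  have hr_tendsto : Filter.Tendsto r Filter.atTop (nhds 0) :=
    squeeze_zero hr0 hub (Stmt11.tendsto_aux)
  have hcoe : Filter.Tendsto (fun n => ((r n : ℝ) : EReal)) Filter.atTop
      (nhds (((0 : ℝ) : ℝ) : EReal)) := EReal.tendsto_coe.mpr hr_tendsto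
  rw [EReal.coe_zero] at hcoe
  have hfun : (fun n : ℕ => ((((n : ℝ))⁻¹ : ℝ) : EReal)
      * negLog2 (Stmt11.mup x (pref x n))) = fun n => ((r n : ℝ) : EReal) :=
    funext heq
  show Filter.liminf (fun n : ℕ => ((((n : ℝ))⁻¹ : ℝ) : EReal)
      * negLog2 (Stmt11.mup x (pref x n))) Filter.atTop = 0
  rw [hfun]
  exact hcoe.liminf_eq
end

section
/- If x ∈ {0,1}^∞ and μ_x is the stationary measure with μ_x(x_{1..n}) ≥ π(1)/(n+1)^2 for all n (π(1) > 0 fixed), then μ_x predicts δ_x in the almost-sure pointwise sense: the conditional probabilities μ_x(x_{n+1} | x_{1..n}) need not converge to 1, but (1/n)·(−log μ_x(x_{1..n})) → 0 as n → ∞. -/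
lemma aux_le_one (x : ℕ → Bool) (μ : TSD) : ∀ n, μ.p (pref x n) ≤ 1 := by
  intro n
  induction n with
  | zero => simp [pref, μ.empty_one]
  | succ n ih =>
    have hpref : pref x (n+1) = pref x n ++ [x n] := by
      simp [pref, List.range_succ]
    rw [hpref]
    refine le_trans ?_ ih
    have := μ.additive (pref x n)
    have h0 := μ.nonneg (pref x n ++ [false])
    have h1 := μ.nonneg (pref x n ++ [true])
    cases x n <;> linarith

/-- if `μ_x` is stationary and `μ_x(x_{1..n}) ≥ π(1)/(n+1)^2`
for all `n` with a fixed constant `π(1) > 0`, then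
`(1/n)(−log₂ μ_x(x_{1..n})) → 0` as `n → ∞`. -/
theorem stmt16 (x : ℕ → Bool) (μ : TSD) (hμ : StationaryTSD μ)
    (c : ℝ) (hc : 0 < c)
    (h : ∀ n : ℕ, c / ((n : ℝ) + 1)^2 ≤ μ.p (pref x n)) :
    Filter.Tendsto (fun n : ℕ => -Real.logb 2 (μ.p (pref x n)) / (n : ℝ))
      Filter.atTop (nhds 0) := by
  have hupper : Filter.Tendsto
      (fun n : ℕ => (2 * Real.logb 2 ((n:ℝ)+1) - Real.logb 2 c) / (n:ℝ))
      Filter.atTop (nhds 0) := by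
    have h1 : Filter.Tendsto (fun n : ℕ => Real.log ((n:ℝ)+1) / (n:ℝ))
        Filter.atTop (nhds 0) := by
      have := Real.tendsto_pow_log_div_mul_add_atTop 1 (-1) 1 one_ne_zero
      have hcomp := this.comp (Filter.tendsto_atTop_add_const_right Filter.atTop 1
        tendsto_natCast_atTop_atTop)
      refine hcomp.congr (fun n => ?_)
      simp [Function.comp]
    have h2 : Filter.Tendsto (fun n : ℕ => Real.logb 2 c / (n:ℝ))
        Filter.atTop (nhds 0) := tendsto_const_div_atTop_nhds_zero_nat _
    have h3 := ((h1.const_mul (2 / Real.log 2)).sub h2)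
    rw [mul_zero, sub_zero] at h3
    refine h3.congr (fun n => ?_)
    simp only [Real.logb]
    ring
  have key : ∀ n : ℕ, 0 < μ.p (pref x n) := fun n =>
    lt_of_lt_of_le (by positivity) (h n)
  refine tendsto_of_tendsto_of_tendsto_of_le_of_le' tendsto_const_nhds hupper ?_ ?_
  · filter_upwards [Filter.eventually_ge_atTop 1] with n hn
    have hlog : Real.logb 2 (μ.p (pref x n)) ≤ 0 := by
      apply Real.logb_nonpos one_lt_two (key n).le (aux_le_one x μ n)
    have hn0 : (0:ℝ) ≤ (n:ℝ) := n.cast_nonneg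
    have : (0:ℝ) ≤ -Real.logb 2 (μ.p (pref x n)) := by linarith
    positivity
  · filter_upwards [Filter.eventually_ge_atTop 1] with n hn
    have hn0 : (0:ℝ) < (n:ℝ) := by exact_mod_cast hn
    have hn1 : (0:ℝ) < (n:ℝ)+1 := by positivity
    have hmono := Real.logb_le_logb_of_le one_lt_two (by positivity) (h n)
    have hrw : Real.logb 2 (c / ((n:ℝ)+1)^2)
        = Real.logb 2 c - 2 * Real.logb 2 ((n:ℝ)+1) := by
      rw [Real.logb_div hc.ne' (by positivity), Real.logb_pow]
      push_cast; ring
    rw [hrw] at hmono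
    gcongr
    linarith
end
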